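/- Let m, n, r be positive integers and let η, E, G, Γ_u, Γ_v ≥ 0 be reals. Let U₀ be a real m×r matrix with ‖U₀‖_F ≤ Γ_u and V₀ a real n×r matrix with ‖V₀‖_F ≤ Γ_v. Let P and P′ be real m×r matrices with ‖P‖_F ≤ E·G·Γ_v and ‖P′‖_F ≤ E·G·Γ_v, and let Q and Q′ be real n×r matrices with ‖Q‖_F ≤ E·G·Γ_u and ‖Q′‖_F ≤ E·G·Γ_u. Then ‖(U₀ − η·P′)·(V₀ − η·Q′)ᵀ − (U₀ − η·P)·(V₀ − η·Q)ᵀ‖_F² ≤ 12·η²·E²·G²·(Γ_u⁴ + Γ_v⁴ + η²·E²·G²·Γ_u²·Γ_v²). -/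

import Mathlib

open Matrix BigOperators

/-- Squared Frobenius norm of a real matrix. -/
noncomputable def frobSq {m n : ℕ} (A : Matrix (Fin m) (Fin n) ℝ) : ℝ :=
  ∑ i, ∑ j, (A i j) ^ 2

/-- Frobenius norm of a real matrix. -/
noncomputable def frobNorm {m n : ℕ} (A : Matrix (Fin m) (Fin n) ℝ) : ℝ :=
  Real.sqrt (frobSq A)

attribute [local instance] Matrix.frobeniusSeminormedAddCommGroup Matrix.frobeniusNormSMulClass

lemma frobNorm_eq_norm {m n : ℕ} (A : Matrix (Fin m) (Fin n) ℝ) : frobNorm A = ‖A‖ := by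
  rw [frobNorm, frobSq, Matrix.frobenius_norm_def, Real.sqrt_eq_rpow]
  congr 1
  refine Finset.sum_congr rfl fun i _ => Finset.sum_congr rfl fun j _ => ?_
  rw [Real.rpow_two, Real.norm_eq_abs, sq_abs]

lemma frobSq_eq_sq_norm {m n : ℕ} (A : Matrix (Fin m) (Fin n) ℝ) : frobSq A = ‖A‖ ^ 2 := by
  have h : 0 ≤ frobSq A := by
    apply Finset.sum_nonneg; intro i _; apply Finset.sum_nonneg; intro j _; positivity
  rw [← frobNorm_eq_norm, frobNorm, Real.sq_sqrt h]

/-- Deterministic matrix core of Lemma 4: two candidates obtained from common initial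
factors (U₀, V₀) by subtracting η times accumulated gradient terms of bounded
Frobenius norm yield recovered products differing by at most
12η²E²G²(Γ_u⁴ + Γ_v⁴ + η²E²G²Γ_u²Γ_v²) in squared Frobenius norm. -/
theorem recovered_product_deviation_bound {m n r : ℕ}
    (hm : 0 < m) (hn : 0 < n) (hr : 0 < r)
    (η E G Γu Γv : ℝ) (hη : 0 ≤ η) (hE : 0 ≤ E) (hG : 0 ≤ G)
    (hΓu : 0 ≤ Γu) (hΓv : 0 ≤ Γv)
    (U₀ : Matrix (Fin m) (Fin r) ℝ) (hU₀ : frobNorm U₀ ≤ Γu)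
    (V₀ : Matrix (Fin n) (Fin r) ℝ) (hV₀ : frobNorm V₀ ≤ Γv)
    (P P' : Matrix (Fin m) (Fin r) ℝ)
    (hP : frobNorm P ≤ E * G * Γv) (hP' : frobNorm P' ≤ E * G * Γv)
    (Q Q' : Matrix (Fin n) (Fin r) ℝ)
    (hQ : frobNorm Q ≤ E * G * Γu) (hQ' : frobNorm Q' ≤ E * G * Γu) :
    frobSq ((U₀ - η • P') * (V₀ - η • Q')ᵀ - (U₀ - η • P) * (V₀ - η • Q)ᵀ) ≤
      12 * η ^ 2 * E ^ 2 * G ^ 2 *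
        (Γu ^ 4 + Γv ^ 4 + η ^ 2 * E ^ 2 * G ^ 2 * Γu ^ 2 * Γv ^ 2) := by
  rw [frobNorm_eq_norm] at hU₀ hV₀ hP hP' hQ hQ'
  set D := (U₀ - η • P') * (V₀ - η • Q')ᵀ - (U₀ - η • P) * (V₀ - η • Q)ᵀ with hDdef
  have expand : ∀ (Pa : Matrix (Fin m) (Fin r) ℝ) (Qa : Matrix (Fin n) (Fin r) ℝ),
      (U₀ - η • Pa) * (V₀ - η • Qa)ᵀ =
        U₀ * V₀ᵀ - η • (U₀ * Qaᵀ) - η • (Pa * V₀ᵀ) + (η * η) • (Pa * Qaᵀ) := by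
    intro Pa Qa
    rw [transpose_sub, transpose_smul, Matrix.sub_mul, Matrix.mul_sub, Matrix.mul_sub,
      Matrix.smul_mul, Matrix.smul_mul, Matrix.mul_smul, Matrix.mul_smul, smul_smul]
    abel
  have hD : D = η • (U₀ * (Q - Q')ᵀ) + η • ((P - P') * V₀ᵀ)
      + (η * η) • (P' * Q'ᵀ - P * Qᵀ) := by
    rw [hDdef, expand, expand, transpose_sub, Matrix.mul_sub, Matrix.sub_mul,
      smul_sub, smul_sub, smul_sub]
    abel
  have hnormD : ‖D‖ ≤ 2 * η * E * G * (Γu ^ 2 + Γv ^ 2 + η * E * G * Γu * Γv) := by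
    have h1 : ‖U₀ * (Q - Q')ᵀ‖ ≤ Γu * (2 * (E * G * Γu)) := by
      calc ‖U₀ * (Q - Q')ᵀ‖ ≤ ‖U₀‖ * ‖(Q - Q')ᵀ‖ := Matrix.frobenius_norm_mul _ _
        _ ≤ Γu * (2 * (E * G * Γu)) := by
            rw [Matrix.frobenius_norm_transpose]
            have := norm_sub_le Q Q'
            have h0 : (0:ℝ) ≤ ‖Q - Q'‖ := norm_nonneg _
            apply mul_le_mul hU₀ (by linarith) h0 hΓu
    have h2 : ‖(P - P') * V₀ᵀ‖ ≤ 2 * (E * G * Γv) * Γv := by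
      calc ‖(P - P') * V₀ᵀ‖ ≤ ‖P - P'‖ * ‖V₀ᵀ‖ := Matrix.frobenius_norm_mul _ _
        _ ≤ 2 * (E * G * Γv) * Γv := by
            rw [Matrix.frobenius_norm_transpose]
            have := norm_sub_le P P'
            apply mul_le_mul (by linarith) hV₀ (norm_nonneg _) (by positivity)
    have h3 : ‖P' * Q'ᵀ - P * Qᵀ‖ ≤ 2 * ((E * G * Γv) * (E * G * Γu)) := by
      have ha : ‖P' * Q'ᵀ‖ ≤ (E * G * Γv) * (E * G * Γu) := by
        calc ‖P' * Q'ᵀ‖ ≤ ‖P'‖ * ‖Q'ᵀ‖ := Matrix.frobenius_norm_mul _ _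
          _ ≤ (E * G * Γv) * (E * G * Γu) := by
              rw [Matrix.frobenius_norm_transpose]
              exact mul_le_mul hP' hQ' (norm_nonneg _) (by positivity)
      have hb : ‖P * Qᵀ‖ ≤ (E * G * Γv) * (E * G * Γu) := by
        calc ‖P * Qᵀ‖ ≤ ‖P‖ * ‖Qᵀ‖ := Matrix.frobenius_norm_mul _ _
          _ ≤ (E * G * Γv) * (E * G * Γu) := by
              rw [Matrix.frobenius_norm_transpose]
              exact mul_le_mul hP hQ (norm_nonneg _) (by positivity)
      calc ‖P' * Q'ᵀ - P * Qᵀ‖ ≤ ‖P' * Q'ᵀ‖ + ‖P * Qᵀ‖ := norm_sub_le _ _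
        _ ≤ 2 * ((E * G * Γv) * (E * G * Γu)) := by linarith
    calc ‖D‖ ≤ ‖η • (U₀ * (Q - Q')ᵀ) + η • ((P - P') * V₀ᵀ)‖
          + ‖(η * η) • (P' * Q'ᵀ - P * Qᵀ)‖ := by rw [hD]; exact norm_add_le _ _
      _ ≤ ‖η • (U₀ * (Q - Q')ᵀ)‖ + ‖η • ((P - P') * V₀ᵀ)‖
          + ‖(η * η) • (P' * Q'ᵀ - P * Qᵀ)‖ := by
            have := norm_add_le (η • (U₀ * (Q - Q')ᵀ)) (η • ((P - P') * V₀ᵀ)); linarith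
      _ = η * ‖U₀ * (Q - Q')ᵀ‖ + η * ‖(P - P') * V₀ᵀ‖
          + (η * η) * ‖P' * Q'ᵀ - P * Qᵀ‖ := by
            rw [norm_smul, norm_smul, norm_smul, Real.norm_eq_abs, Real.norm_eq_abs,
              abs_of_nonneg hη, abs_of_nonneg (mul_nonneg hη hη)]
      _ ≤ η * (Γu * (2 * (E * G * Γu))) + η * (2 * (E * G * Γv) * Γv)
          + (η * η) * (2 * ((E * G * Γv) * (E * G * Γu))) := by
            have h0 : (0:ℝ) ≤ η * η := mul_nonneg hη hη
            gcongr
      _ = 2 * η * E * G * (Γu ^ 2 + Γv ^ 2 + η * E * G * Γu * Γv) := by ring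
  rw [frobSq_eq_sq_norm]
  have hsq : ‖D‖ ^ 2 ≤ (2 * η * E * G * (Γu ^ 2 + Γv ^ 2 + η * E * G * Γu * Γv)) ^ 2 :=
    pow_le_pow_left₀ (norm_nonneg _) hnormD 2
  have hkey : (2 * η * E * G * (Γu ^ 2 + Γv ^ 2 + η * E * G * Γu * Γv)) ^ 2 ≤
      12 * η ^ 2 * E ^ 2 * G ^ 2 *
        (Γu ^ 4 + Γv ^ 4 + η ^ 2 * E ^ 2 * G ^ 2 * Γu ^ 2 * Γv ^ 2) := by
    nlinarith [mul_nonneg (mul_nonneg (mul_nonneg (sq_nonneg η) (sq_nonneg E)) (sq_nonneg G))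
      (add_nonneg (add_nonneg (sq_nonneg (Γu ^ 2 - Γv ^ 2))
        (sq_nonneg (Γu ^ 2 - η * E * G * Γu * Γv))) (sq_nonneg (Γv ^ 2 - η * E * G * Γu * Γv)))]
  linarith
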